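/- Let f be differentiable on an open interval containing [a,b] with f' integrable, and suppose |f'|^q is concave on [a,b] for p, q > 1 with 1/p+1/q = 1. Then |f((a+b)/2) - (1/(b-a))∫ₐᵇ f(u) du| ≤ ((b-a)/(4(p+1)^{1/p}))·[|f'((3a+b)/4)| + |f'((a+3b)/4)|]. -/

import Mathlib

open MeasureTheory

private lemma concave_two {g : ℝ → ℝ} {s : Set ℝ} (h : ConcaveOn ℝ s g)
    {u v : ℝ} (hu : u ∈ s) (hv : v ∈ s) {t : ℝ} (h0 : 0 ≤ t) (h1 : t ≤ 1) :
    t * g u + (1 - t) * g v ≤ g (t * u + (1 - t) * v) := by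
  simpa [smul_eq_mul] using h.2 hu hv h0 (by linarith) (by ring)

private lemma chord_bound {g : ℝ → ℝ} {a b : ℝ} (hab : a < b)
    (hconc : ConcaveOn ℝ (Set.Icc a b) g) :
    ∀ v ∈ Set.Icc a b, min (g a) (g b) ≤ g v := by
  intro v hv
  set t := (b - v) / (b - a) with ht
  have hba : (0:ℝ) < b - a := by linarith
  have ht0 : 0 ≤ t := div_nonneg (by linarith [hv.2]) hba.le
  have ht1 : t ≤ 1 := by rw [div_le_one hba]; linarith [hv.1]
  have htb : t * (b - a) = b - v := div_mul_cancel₀ _ hba.ne'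
  have hvt : t * a + (1 - t) * b = v := by linarith [htb]
  have hcc := concave_two hconc (Set.left_mem_Icc.2 hab.le)
    (Set.right_mem_Icc.2 hab.le) ht0 ht1
  rw [hvt] at hcc
  calc min (g a) (g b) = t * min (g a) (g b) + (1 - t) * min (g a) (g b) := by ring
    _ ≤ t * g a + (1 - t) * g b :=
        add_le_add (mul_le_mul_of_nonneg_left (min_le_left _ _) ht0)
          (mul_le_mul_of_nonneg_left (min_le_right _ _) (by linarith))
    _ ≤ g v := hcc

private lemma upper_bound {g : ℝ → ℝ} {a b : ℝ} (hab : a < b)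
    (hconc : ConcaveOn ℝ (Set.Icc a b) g) :
    ∀ u ∈ Set.Icc a b, g u ≤ 2 * g ((a + b) / 2) - min (g a) (g b) := by
  intro u hu
  have hu' : a + b - u ∈ Set.Icc a b := ⟨by linarith [hu.2], by linarith [hu.1]⟩
  have h1 := concave_two hconc hu hu' (by norm_num : (0:ℝ) ≤ 1/2) (by norm_num)
  have hmid : (1/2 : ℝ) * u + (1 - 1/2 : ℝ) * (a + b - u) = (a + b) / 2 := by ring
  rw [hmid] at h1
  norm_num at h1
  have h2 := chord_bound hab hconc (a + b - u) hu'
  linarith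

private lemma half_bound (f' : ℝ → ℝ) (a b x y p q : ℝ)
    (hp : 1 < p) (hq : 1 < q) (hpq : 1 / p + 1 / q = 1)
    (hxy : x < y) (hsub : Set.Icc x y ⊆ Set.Icc a b)
    (hmeas : AEStronglyMeasurable f' (volume.restrict (Set.Ioc x y)))
    (hconc : ConcaveOn ℝ (Set.Icc a b) (fun u => |f' u| ^ q))
    (w : ℝ → ℝ) (hwc : Continuous w)
    (hwnn : ∀ u ∈ Set.Icc x y, 0 ≤ w u)
    (hwint : ∫ u in Set.Ioc x y, w u ^ p = (y - x) ^ (p + 1) / (p + 1)) :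
    ∫ u in x..y, w u * |f' u| ≤
      (y - x) ^ 2 / (p + 1) ^ (1 / p) * |f' ((x + y) / 2)| := by
  have hp0 : (0:ℝ) < p := lt_trans zero_lt_one hp
  have hq0 : (0:ℝ) < q := lt_trans zero_lt_one hq
  have hab : a < b := by
    have h1 := hsub ⟨le_refl x, hxy.le⟩
    have h2 := hsub ⟨hxy.le, le_refl y⟩
    exact lt_of_lt_of_le (lt_of_le_of_lt h1.1 hxy) h2.2
  set g : ℝ → ℝ := fun u => |f' u| ^ q with hg
  have hgnn : ∀ u, 0 ≤ g u := fun u => Real.rpow_nonneg (abs_nonneg _) q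
  set M : ℝ := 2 * g ((a + b) / 2) - min (g a) (g b) with hM
  have hMb : ∀ u ∈ Set.Icc a b, g u ≤ M := upper_bound hab hconc
  -- measurability of g
  have hcont : Continuous fun t : ℝ => |t| ^ q :=
    continuous_abs.rpow_const (fun t => Or.inr hq0.le)
  have habs : AEStronglyMeasurable (fun u => |f' u|) (volume.restrict (Set.Ioc x y)) := by
    simpa [Real.norm_eq_abs] using hmeas.norm
  have hgmeas : AEStronglyMeasurable g (volume.restrict (Set.Ioc x y)) :=
    hcont.comp_aestronglyMeasurable hmeas
  have hIccsub : Set.Ioc x y ⊆ Set.Icc a b := fun u hu => hsub ⟨hu.1.le, hu.2⟩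
  have hgint : IntegrableOn g (Set.Ioc x y) := by
    refine Integrable.mono' (integrable_const M) hgmeas ?_
    filter_upwards [ae_restrict_mem measurableSet_Ioc] with u hu
    rw [Real.norm_of_nonneg (hgnn u)]
    exact hMb u (hIccsub hu)
  have hgii : IntervalIntegrable g volume x y :=
    (intervalIntegrable_iff_integrableOn_Ioc_of_le hxy.le).2 hgint
  -- Hermite-Hadamard (right inequality) for g on [x,y]
  set c : ℝ := (x + y) / 2 with hc
  have hrii : IntervalIntegrable (fun u => g (x + y - u)) volume x y := by
    have := (hgii.comp_sub_left (x + y)).symm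
    simpa using this
  have hrefl : (∫ u in x..y, g (x + y - u)) = ∫ u in x..y, g u := by
    rw [intervalIntegral.integral_comp_sub_left g (x + y)]
    simp
  have hHH : (∫ u in x..y, g u) ≤ (y - x) * g c := by
    have hmono : (∫ u in x..y, (g u + g (x + y - u))) ≤ ∫ u in x..y, (2 * g c) := by
      refine intervalIntegral.integral_mono_on hxy.le (hgii.add hrii)
        intervalIntegrable_const ?_
      intro u hu
      have hu1 : u ∈ Set.Icc a b := hsub hu
      have hu2 : x + y - u ∈ Set.Icc a b :=
        hsub ⟨by linarith [hu.2], by linarith [hu.1]⟩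
      have h1 := concave_two hconc hu1 hu2 (by norm_num : (0:ℝ) ≤ 1/2) (by norm_num)
      have hmid : (1/2 : ℝ) * u + (1 - 1/2 : ℝ) * (x + y - u) = c := by rw [hc]; ring
      rw [hmid] at h1
      norm_num at h1
      linarith
    rw [intervalIntegral.integral_add hgii hrii, hrefl,
      intervalIntegral.integral_const, smul_eq_mul] at hmono
    linarith
  -- Hölder
  haveI : IsFiniteMeasure (volume.restrict (Set.Ioc x y)) :=
    ⟨by rw [Measure.restrict_apply_univ]; exact measure_Ioc_lt_top⟩
  have hpq' : p.HolderConjugate q := Real.holderConjugate_iff.2 ⟨hp, by rw [← one_div, ← one_div]; exact hpq⟩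
  obtain ⟨C, hC⟩ := (isCompact_Icc (a := x) (b := y)).exists_bound_of_continuousOn
    hwc.continuousOn
  have hwmem : MemLp w (ENNReal.ofReal p) (volume.restrict (Set.Ioc x y)) := by
    refine MemLp.of_bound hwc.aestronglyMeasurable.restrict C ?_
    filter_upwards [ae_restrict_mem measurableSet_Ioc] with u hu
    exact hC u ⟨hu.1.le, hu.2⟩
  have hfmem : MemLp (fun u => |f' u|) (ENNReal.ofReal q)
      (volume.restrict (Set.Ioc x y)) := by
    refine MemLp.of_bound habs (M ^ (1/q)) ?_
    filter_upwards [ae_restrict_mem measurableSet_Ioc] with u hu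
    rw [Real.norm_of_nonneg (abs_nonneg _)]
    have h1 : |f' u| = (g u) ^ (1/q) := by
      rw [hg, ← Real.rpow_mul (abs_nonneg _), mul_one_div_cancel hq0.ne',
        Real.rpow_one]
    rw [h1]
    exact Real.rpow_le_rpow (hgnn u) (hMb u (hIccsub hu)) (by positivity)
  have hwnn' : 0 ≤ᵐ[volume.restrict (Set.Ioc x y)] w := by
    filter_upwards [ae_restrict_mem measurableSet_Ioc] with u hu
    exact hwnn u ⟨hu.1.le, hu.2⟩
  have hfnn' : 0 ≤ᵐ[volume.restrict (Set.Ioc x y)] fun u => |f' u| :=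
    Filter.Eventually.of_forall fun u => abs_nonneg _
  have hholder := MeasureTheory.integral_mul_le_Lp_mul_Lq_of_nonneg hpq'
    hwnn' hfnn' hwmem hfmem
  -- set-integral versions of bounds
  have hHH' : (∫ u in Set.Ioc x y, g u) ≤ (y - x) * g c := by
    rwa [intervalIntegral.integral_of_le hxy.le] at hHH
  have hgnnint : 0 ≤ ∫ u in Set.Ioc x y, g u :=
    integral_nonneg fun u => hgnn u
  -- final algebra
  have hd : (0:ℝ) < y - x := by linarith
  have hA : (0:ℝ) ≤ |f' c| := abs_nonneg _
  have key : ((y - x) ^ (p+1) / (p+1)) ^ (1/p) * ((y - x) * g c) ^ (1/q) =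
      (y - x) ^ 2 / (p + 1) ^ (1/p) * |f' c| := by
    have hp1 : (0:ℝ) ≤ p + 1 := by linarith
    have e1 : ((y - x) ^ (p+1) / (p+1)) ^ (1/p) =
        (y - x) ^ ((p+1) * (1/p)) / (p+1) ^ (1/p) := by
      rw [Real.div_rpow (Real.rpow_nonneg hd.le _) hp1, ← Real.rpow_mul hd.le]
    have e2 : ((y - x) * g c) ^ (1/q) = (y - x) ^ (1/q) * |f' c| := by
      rw [hg, Real.mul_rpow hd.le (Real.rpow_nonneg hA _),
        ← Real.rpow_mul hA, mul_one_div_cancel hq0.ne', Real.rpow_one]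
    have e3 : (y - x) ^ ((p+1) * (1/p)) * (y - x) ^ (1/q) = (y - x) ^ 2 := by
      rw [← Real.rpow_add hd]
      have hexp : (p+1) * (1/p) + 1/q = 2 := by
        have h1 : (p+1) * (1/p) = 1 + 1/p := by field_simp
        rw [h1]; linarith
      rw [hexp, show (2:ℝ) = ((2:ℕ):ℝ) by norm_num, Real.rpow_natCast]
    calc ((y - x) ^ (p+1) / (p+1)) ^ (1/p) * ((y - x) * g c) ^ (1/q)
        = (y - x) ^ ((p+1) * (1/p)) * (y - x) ^ (1/q) / (p+1) ^ (1/p) * |f' c| := by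
          rw [e1, e2]; ring
      _ = (y - x) ^ 2 / (p + 1) ^ (1/p) * |f' c| := by rw [e3]
  calc ∫ u in x..y, w u * |f' u|
      = ∫ u in Set.Ioc x y, w u * |f' u| := intervalIntegral.integral_of_le hxy.le
    _ ≤ (∫ u in Set.Ioc x y, w u ^ p) ^ (1/p) *
          (∫ u in Set.Ioc x y, |f' u| ^ q) ^ (1/q) := hholder
    _ ≤ ((y - x) ^ (p+1) / (p+1)) ^ (1/p) * ((y - x) * g c) ^ (1/q) := by
        rw [hwint]
        refine mul_le_mul_of_nonneg_left ?_ (Real.rpow_nonneg (by positivity) _)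
        exact Real.rpow_le_rpow hgnnint hHH' (by positivity)
    _ = (y - x) ^ 2 / (p + 1) ^ (1/p) * |f' c| := key

theorem ostrowski_concave_midpoint
    (f f' : ℝ → ℝ) (a b p q : ℝ) (hab : a < b)
    (hp : 1 < p) (hq : 1 < q) (hpq : 1 / p + 1 / q = 1)
    (hderiv : ∀ y ∈ Set.Icc a b, HasDerivAt f (f' y) y)
    (hint : IntervalIntegrable f' volume a b)
    (hconc : ConcaveOn ℝ (Set.Icc a b) (fun y => |f' y| ^ q)) :
    |f ((a + b) / 2) - (1 / (b - a)) * ∫ u in a..b, f u| ≤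
      ((b - a) / (4 * (p + 1) ^ (1 / p))) *
        (|f' ((3 * a + b) / 4)| + |f' ((a + 3 * b) / 4)|) := by
  have hp0 : (0:ℝ) < p := lt_trans zero_lt_one hp
  set m : ℝ := (a + b) / 2 with hmdef
  have ham : a < m := by rw [hmdef]; linarith
  have hmb : m < b := by rw [hmdef]; linarith
  have hIcc1 : Set.Icc a m ⊆ Set.Icc a b := Set.Icc_subset_Icc le_rfl hmb.le
  have hIcc2 : Set.Icc m b ⊆ Set.Icc a b := Set.Icc_subset_Icc ham.le le_rfl
  have huIcc1 : Set.uIcc a m ⊆ Set.uIcc a b := by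
    rw [Set.uIcc_of_le ham.le, Set.uIcc_of_le hab.le]; exact hIcc1
  have huIcc2 : Set.uIcc m b ⊆ Set.uIcc a b := by
    rw [Set.uIcc_of_le hmb.le, Set.uIcc_of_le hab.le]; exact hIcc2
  have hcontf : ContinuousOn f (Set.Icc a b) := fun u hu =>
    (hderiv u hu).continuousAt.continuousWithinAt
  have hfi1 : IntervalIntegrable f volume a m :=
    (hcontf.mono (by rw [Set.uIcc_of_le ham.le]; exact hIcc1)).intervalIntegrable
  have hfi2 : IntervalIntegrable f volume m b :=
    (hcontf.mono (by rw [Set.uIcc_of_le hmb.le]; exact hIcc2)).intervalIntegrable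
  have hint1 : IntervalIntegrable f' volume a m := hint.mono_set huIcc1
  have hint2 : IntervalIntegrable f' volume m b := hint.mono_set huIcc2
  have hmem1 : ∀ x ∈ Set.uIcc a m, x ∈ Set.Icc a b := fun x hx => by
    rw [← Set.uIcc_of_le hab.le]; exact huIcc1 hx
  have hmem2 : ∀ x ∈ Set.uIcc m b, x ∈ Set.Icc a b := fun x hx => by
    rw [← Set.uIcc_of_le hab.le]; exact huIcc2 hx
  -- integration by parts
  have ibp1 : ∫ u in a..m, (u - a) * f' u = (m - a) * f m - ∫ u in a..m, f u := by
    have h := intervalIntegral.integral_mul_deriv_eq_deriv_mul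
      (u := fun u => u - a) (u' := fun _ => 1) (v := f) (v' := f')
      (fun x _ => (hasDerivAt_id x).sub_const a)
      (fun x hx => hderiv x (hmem1 x hx))
      intervalIntegrable_const hint1
    simpa using h
  have ibp2 : ∫ u in m..b, (u - b) * f' u = (b - m) * f m - ∫ u in m..b, f u := by
    have h := intervalIntegral.integral_mul_deriv_eq_deriv_mul
      (u := fun u => u - b) (u' := fun _ => 1) (v := f) (v' := f')
      (fun x _ => (hasDerivAt_id x).sub_const b)
      (fun x hx => hderiv x (hmem2 x hx))
      intervalIntegrable_const hint2
    simp only [sub_self, zero_mul, one_mul, zero_sub] at h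
    rw [h]; ring
  have hsplit : (∫ u in a..m, f u) + ∫ u in m..b, f u = ∫ u in a..b, f u :=
    intervalIntegral.integral_add_adjacent_intervals hfi1 hfi2
  have hba : (0:ℝ) < b - a := by linarith
  have hid : f m - (1 / (b - a)) * ∫ u in a..b, f u =
      (1 / (b - a)) * ((∫ u in a..m, (u - a) * f' u) + ∫ u in m..b, (u - b) * f' u) := by
    rw [ibp1, ibp2, ← hsplit, hmdef]
    field_simp
    ring
  -- measurability on subintervals
  have hmeas1 : AEStronglyMeasurable f' (volume.restrict (Set.Ioc a m)) :=
    hint.1.aestronglyMeasurable.mono_measure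
      (Measure.restrict_mono (Set.Ioc_subset_Ioc_right hmb.le) le_rfl)
  have hmeas2 : AEStronglyMeasurable f' (volume.restrict (Set.Ioc m b)) :=
    hint.1.aestronglyMeasurable.mono_measure
      (Measure.restrict_mono (Set.Ioc_subset_Ioc_left ham.le) le_rfl)
  -- weight integrals
  have hrpow : ∀ z : ℝ, 0 < z → ∫ t in (0:ℝ)..z, t ^ p = z ^ (p + 1) / (p + 1) := by
    intro z hz
    rw [integral_rpow (Or.inl (by linarith : (-1:ℝ) < p)),
      Real.zero_rpow (by linarith : p + 1 ≠ 0)]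
    ring
  have hwint1 : ∫ u in Set.Ioc a m, (u - a) ^ p = (m - a) ^ (p + 1) / (p + 1) := by
    rw [← intervalIntegral.integral_of_le ham.le]
    have h := intervalIntegral.integral_comp_sub_right (a := a) (b := m)
      (fun t => t ^ p) a
    rw [h, sub_self]
    exact hrpow _ (by linarith)
  have hwint2 : ∫ u in Set.Ioc m b, (b - u) ^ p = (b - m) ^ (p + 1) / (p + 1) := by
    rw [← intervalIntegral.integral_of_le hmb.le]
    have h := intervalIntegral.integral_comp_sub_left (a := m) (b := b)
      (fun t => t ^ p) b
    rw [h, sub_self]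
    exact hrpow _ (by linarith)
  -- half interval bounds
  have hb1 : ∫ u in a..m, (u - a) * |f' u| ≤
      (m - a) ^ 2 / (p + 1) ^ (1 / p) * |f' ((a + m) / 2)| :=
    half_bound f' a b a m p q hp hq hpq ham hIcc1 hmeas1 hconc
      (fun u => u - a) (continuous_id.sub continuous_const)
      (fun u hu => by beta_reduce; linarith [hu.1]) hwint1
  have hb2 : ∫ u in m..b, (b - u) * |f' u| ≤
      (b - m) ^ 2 / (p + 1) ^ (1 / p) * |f' ((m + b) / 2)| :=
    half_bound f' a b m b p q hp hq hpq hmb hIcc2 hmeas2 hconc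
      (fun u => b - u) (continuous_const.sub continuous_id)
      (fun u hu => by beta_reduce; linarith [hu.2]) hwint2
  -- abs of integrals
  have habs1 : |∫ u in a..m, (u - a) * f' u| ≤ ∫ u in a..m, (u - a) * |f' u| := by
    refine le_trans (intervalIntegral.abs_integral_le_integral_abs ham.le) ?_
    refine le_of_eq (intervalIntegral.integral_congr fun u hu => ?_)
    rw [Set.uIcc_of_le ham.le] at hu
    rw [abs_mul, abs_of_nonneg (by linarith [hu.1] : (0:ℝ) ≤ u - a)]
  have habs2 : |∫ u in m..b, (u - b) * f' u| ≤ ∫ u in m..b, (b - u) * |f' u| := by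
    refine le_trans (intervalIntegral.abs_integral_le_integral_abs hmb.le) ?_
    refine le_of_eq (intervalIntegral.integral_congr fun u hu => ?_)
    rw [Set.uIcc_of_le hmb.le] at hu
    rw [abs_mul, abs_sub_comm, abs_of_nonneg (by linarith [hu.2] : (0:ℝ) ≤ b - u)]
  -- midpoints
  have hc1 : (a + m) / 2 = (3 * a + b) / 4 := by rw [hmdef]; ring
  have hc2 : (m + b) / 2 = (a + 3 * b) / 4 := by rw [hmdef]; ring
  rw [hc1] at hb1
  rw [hc2] at hb2
  have hP : (0:ℝ) < (p + 1) ^ (1 / p) := Real.rpow_pos_of_pos (by linarith) _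
  -- combine
  rw [hid, abs_mul,
    abs_of_pos (by positivity : (0:ℝ) < 1 / (b - a))]
  have hsum : |(∫ u in a..m, (u - a) * f' u) + ∫ u in m..b, (u - b) * f' u| ≤
      (m - a) ^ 2 / (p + 1) ^ (1 / p) * |f' ((3 * a + b) / 4)| +
      (b - m) ^ 2 / (p + 1) ^ (1 / p) * |f' ((a + 3 * b) / 4)| :=
    le_trans (abs_add_le _ _) (add_le_add (le_trans habs1 hb1) (le_trans habs2 hb2))
  refine le_trans (mul_le_mul_of_nonneg_left hsum (by positivity)) (le_of_eq ?_)
  have hma : m - a = (b - a) / 2 := by rw [hmdef]; ring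
  have hbm : b - m = (b - a) / 2 := by rw [hmdef]; ring
  rw [hma, hbm]
  field_simp
  ring
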